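/- For skeletons φ and ψ on a justified AJM game A: φ ⊑ ψ if and only if φ• ⊆ ψ•, where φ ⊑ ψ means that whenever sab ∈ φ, s' ∈ ψ and sa ≈_A s'a', there exists b' with s'a'b' ∈ ψ and sab ≈_A s'a'b'. -/
import Mathlib


/- Justified AJM games, after Abramsky's game semantics for access control. -/

namespace AJM

inductive Pol where
  | P
  | O
deriving DecidableEq

inductive QA where
  | Q
  | Ans
deriving DecidableEq

def Pol.flip : Pol → Pol
  | .P => .O
  | .O => .P

/-- Well-bracketed strings over moves (condition (p4)). -/
inductive WB {M : Type} (lab : M → Pol × QA) (just : M → Option M) : List M → Prop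
  | nil : WB lab just []
  | wrap (a q : M) (u : List M) : (lab a).2 = QA.Ans → just a = some q →
      WB lab just u → WB lab just (q :: (u ++ [a]))
  | append (u v : List M) : WB lab just u → WB lab just v → WB lab just (u ++ v)

/-- Conditions (p1)–(p5): Opponent starts, alternation, linearity,
well-bracketing, justifiers occur before their moves. -/
def ValidSeq {M : Type} (lab : M → Pol × QA) (just : M → Option M) (s : List M) : Prop :=
  (∀ m, s.head? = some m → (lab m).1 = Pol.O) ∧
  List.Chain' (fun m m' => (lab m).1 ≠ (lab m').1) s ∧
  s.Nodup ∧
  (∃ t, s <+: t ∧ WB lab just t) ∧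
  (∀ s₁ m s₂, s = s₁ ++ m :: s₂ → ∀ m', just m = some m' → m' ∈ s₁)

/-- A justified AJM game (the data). -/
structure Game where
  M : Type
  lab : M → Pol × QA
  just : M → Option M
  pos : Set (List M)
  equiv : List M → List M → Prop

namespace Game

/-- The axioms making the data of a `Game` an actual justified AJM game. -/
structure Valid (A : Game) : Prop where
  just_wf : WellFounded fun m m' : A.M => A.just m' = some m
  just_pol : ∀ m m', A.just m = some m' → (A.lab m).1 ≠ (A.lab m').1
  just_qa : ∀ m m', A.just m = some m' → (A.lab m).2 = QA.Ans → (A.lab m').2 = QA.Q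
  ans_justified : ∀ m, (A.lab m).2 = QA.Ans → A.just m ≠ none
  pos_nonempty : A.pos.Nonempty
  pos_prefix_closed : ∀ s t : List A.M, s <+: t → t ∈ A.pos → s ∈ A.pos
  pos_valid : ∀ s ∈ A.pos, ValidSeq A.lab A.just s
  equiv_mem : ∀ s t, A.equiv s t → s ∈ A.pos ∧ t ∈ A.pos
  equiv_refl : ∀ s ∈ A.pos, A.equiv s s
  equiv_symm : ∀ s t, A.equiv s t → A.equiv t s
  equiv_trans : ∀ s t u, A.equiv s t → A.equiv t u → A.equiv s u
  equiv_lab : ∀ s t, A.equiv s t → s.map A.lab = t.map A.lab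
  equiv_prefix : ∀ s t s' t', A.equiv s t → s' <+: s → t' <+: t →
      s'.length = t'.length → A.equiv s' t'
  equiv_ext : ∀ s t a, A.equiv s t → s ++ [a] ∈ A.pos → ∃ b, A.equiv (s ++ [a]) (t ++ [b])

/-- A strategy on a game: a non-empty set of even-length positions that is
causally consistent, representation independent and deterministic. -/
structure IsStrategy (A : Game) (σ : Set (List A.M)) : Prop where
  subset_pos : σ ⊆ A.pos
  even_length : ∀ s ∈ σ, Even s.length
  nonempty : σ.Nonempty
  causal : ∀ s a b, s ++ [a, b] ∈ σ → s ∈ σ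
  repind : ∀ s t, s ∈ σ → A.equiv s t → t ∈ σ
  det : ∀ s t a b a' b', s ++ [a, b] ∈ σ → t ++ [a', b'] ∈ σ →
      A.equiv (s ++ [a]) (t ++ [a']) → A.equiv (s ++ [a, b]) (t ++ [a', b'])

/-- A skeleton of a strategy `σ`: a non-empty, causally consistent subset of
`σ` satisfying Uniformization. -/
structure IsSkeletonOf (A : Game) (φ σ : Set (List A.M)) : Prop where
  nonempty : φ.Nonempty
  subset : φ ⊆ σ
  causal : ∀ s a b, s ++ [a, b] ∈ φ → s ∈ φ
  uniformization : ∀ s a b, s ++ [a, b] ∈ σ → s ∈ φ → ∃! b', s ++ [a, b'] ∈ φ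

/-- A skeleton in the abstract sense (independently of any strategy):
a non-empty, causally consistent set of even-length positions satisfying
Functional Determinacy and Functional Representation Independence. -/
structure IsSkeleton (A : Game) (φ : Set (List A.M)) : Prop where
  subset_pos : φ ⊆ A.pos
  even_length : ∀ s ∈ φ, Even s.length
  nonempty : φ.Nonempty
  causal : ∀ s a b, s ++ [a, b] ∈ φ → s ∈ φ
  funDet : ∀ s a b c, s ++ [a, b] ∈ φ → s ++ [a, c] ∈ φ → b = c
  funRepInd : ∀ s t a b a', s ++ [a, b] ∈ φ → t ∈ φ →
      A.equiv (s ++ [a]) (t ++ [a']) →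
      ∃! b', t ++ [a', b'] ∈ φ ∧ A.equiv (s ++ [a, b]) (t ++ [a', b'])

/-- `φ• = { t | ∃ s ∈ φ, s ≈_A t }`, the saturation of `φ` under `≈_A`. -/
def dot (A : Game) (φ : Set (List A.M)) : Set (List A.M) :=
  {t | ∃ s ∈ φ, A.equiv s t}

/-- The preorder `φ ⊑ ψ` on skeletons. -/
def Subeq (A : Game) (φ ψ : Set (List A.M)) : Prop :=
  ∀ s a b s' a', s ++ [a, b] ∈ φ → s' ∈ ψ → A.equiv (s ++ [a]) (s' ++ [a']) →
    ∃ b', s' ++ [a', b'] ∈ ψ ∧ A.equiv (s ++ [a, b]) (s' ++ [a', b'])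

end Game

end AJM

open AJM Game

private lemma even_split {M : Type} (l : List M) (h : Even l.length) :
    l = [] ∨ ∃ t a b, l = t ++ [a, b] := by
  rcases l.eq_nil_or_concat with rfl | ⟨l₀, x, rfl⟩
  · exact Or.inl rfl
  · rcases l₀.eq_nil_or_concat with rfl | ⟨l₁, y, rfl⟩
    · simp [Nat.even_iff] at h
    · exact Or.inr ⟨l₁, y, x, by simp⟩

private lemma skel_nil_mem (A : Game) (φ : Set (List A.M)) (hφ : IsSkeleton A φ) :
    [] ∈ φ := by
  obtain ⟨s, hs⟩ := hφ.nonempty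
  suffices h : ∀ n (s : List A.M), s.length ≤ n → s ∈ φ → [] ∈ φ from
    h s.length s le_rfl hs
  intro n
  induction n with
  | zero =>
    intro s hl hs
    rwa [List.length_eq_zero_iff.mp (Nat.le_zero.mp hl)] at hs
  | succ n ih =>
    intro s hl hs
    rcases even_split s (hφ.even_length s hs) with rfl | ⟨t, a, b, rfl⟩
    · exact hs
    · refine ih t ?_ (hφ.causal t a b hs)
      simp only [List.length_append, List.length_cons, List.length_nil] at hl
      omega

private lemma equiv_length (A : Game) {s t : List A.M} (hA : A.Valid)
    (h : A.equiv s t) : s.length = t.length := by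
  have := congrArg List.length (hA.equiv_lab s t h)
  simpa using this

/-- For skeletons `φ`, `ψ` on `A`: `φ ⊑ ψ` iff `φ• ⊆ ψ•`. -/
theorem subeq_iff_dot_subset (A : Game) (hA : A.Valid)
    (φ ψ : Set (List A.M)) (hφ : IsSkeleton A φ) (hψ : IsSkeleton A ψ) :
    Subeq A φ ψ ↔ dot A φ ⊆ dot A ψ := by
  have nil_pos : ([] : List A.M) ∈ A.pos := by
    obtain ⟨w, hw⟩ := hA.pos_nonempty
    exact hA.pos_prefix_closed [] w List.nil_prefix hw
  constructor
  · intro h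
    have key : ∀ n (s : List A.M), s.length ≤ n → s ∈ φ → ∃ u ∈ ψ, A.equiv u s := by
      intro n
      induction n with
      | zero =>
        intro s hl hs
        rw [List.length_eq_zero_iff.mp (Nat.le_zero.mp hl)]
        exact ⟨[], skel_nil_mem A ψ hψ, hA.equiv_refl [] nil_pos⟩
      | succ n ih =>
        intro s hl hs
        rcases even_split s (hφ.even_length s hs) with rfl | ⟨t, a, b, rfl⟩
        · exact ⟨[], skel_nil_mem A ψ hψ, hA.equiv_refl [] nil_pos⟩
        · have ht : t ∈ φ := hφ.causal t a b hs
          have hlt : t.length ≤ n := by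
            simp only [List.length_append, List.length_cons, List.length_nil] at hl
            omega
          obtain ⟨u, hu, hut⟩ := ih t hlt ht
          have hta : t ++ [a] ∈ A.pos := by
            refine hA.pos_prefix_closed _ (t ++ [a, b]) ⟨[b], by simp⟩
              (hφ.subset_pos hs)
          obtain ⟨a', ha'⟩ := hA.equiv_ext t u a (hA.equiv_symm _ _ hut) hta
          obtain ⟨b', hb'ψ, hb'e⟩ := h t a b u a' hs hu ha'
          exact ⟨u ++ [a', b'], hb'ψ, hA.equiv_symm _ _ hb'e⟩
    intro x hx
    obtain ⟨s, hs, hse⟩ := hx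
    obtain ⟨u, hu, hus⟩ := key s.length s le_rfl hs
    exact ⟨u, hu, hA.equiv_trans _ _ _ hus hse⟩
  · intro h s a b s' a' hs hs' he
    have hmem : s ++ [a, b] ∈ dot A φ :=
      ⟨s ++ [a, b], hs, hA.equiv_refl _ (hφ.subset_pos hs)⟩
    obtain ⟨u, hu, hue⟩ := h hmem
    have hulen : u.length = s.length + 2 := by
      have := equiv_length A hA hue
      simpa using this
    rcases even_split u (hψ.even_length u hu) with rfl | ⟨u₀, c, d, rfl⟩
    · simp at hulen
    · -- hue : A.equiv (u₀ ++ [c, d]) (s ++ [a, b])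
      have e : A.equiv (s ++ [a, b]) (u₀ ++ [c, d]) := hA.equiv_symm _ _ hue
      have hpre : A.equiv (s ++ [a]) (u₀ ++ [c]) := by
        refine hA.equiv_prefix _ _ _ _ e ⟨[b], by simp⟩ ⟨[d], by simp⟩ ?_
        simp only [List.length_append, List.length_cons, List.length_nil] at hulen ⊢
        omega
      have hpre' : A.equiv (u₀ ++ [c]) (s' ++ [a']) :=
        hA.equiv_trans _ _ _ (hA.equiv_symm _ _ hpre) he
      obtain ⟨b', ⟨hb'ψ, hb'e⟩, _⟩ := hψ.funRepInd u₀ s' c d a' hu hs' hpre'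
      exact ⟨b', hb'ψ, hA.equiv_trans _ _ _ e hb'e⟩
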